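/- Let ℰ and 𝒢 be weak eventual identities on an F-manifold (M, ∘, e), i.e., L_ℰ(∘)(X,Y) = [e,ℰ]∘X∘Y and L_𝒢(∘)(X,Y) = [e,𝒢]∘X∘Y for all vector fields X, Y. Then the product ℰ ∘ 𝒢 is also a weak eventual identity: L_{ℰ∘𝒢}(∘)(X,Y) = [e, ℰ∘𝒢] ∘ X ∘ Y for all X, Y. -/
import Mathlib


/-- Abstract formalization on the Lie algebra of vector fields with the F-manifold
multiplication `∘` (Hertling–Manin condition): if `ℰ` and `𝒢` are weak eventual
identities then so is `ℰ∘𝒢`: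
`L_{ℰ∘𝒢}(∘)(X,Y) = [e, ℰ∘𝒢] ∘ X ∘ Y` for all `X, Y`. -/
theorem stmt19 (V : Type*) [LieRing V]
    (mul : V → V → V) (e : V)
    (hcomm : ∀ X Y, mul X Y = mul Y X)
    (hassoc : ∀ X Y Z, mul (mul X Y) Z = mul X (mul Y Z))
    (hunit : ∀ X, mul e X = X)
    (haddl : ∀ X Y Z, mul (X + Y) Z = mul X Z + mul Y Z)
    (LD : V → V → V → V)
    (hLD : ∀ Z X Y, LD Z X Y = ⁅Z, mul X Y⁆ - mul ⁅Z, X⁆ Y - mul X ⁅Z, Y⁆)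
    (hHM : ∀ X Y Z W, LD (mul X Y) Z W = mul X (LD Y Z W) + mul Y (LD X Z W))
    (ℰ 𝒢 : V)
    (hℰ : ∀ X Y, LD ℰ X Y = mul ⁅e, ℰ⁆ (mul X Y))
    (h𝒢 : ∀ X Y, LD 𝒢 X Y = mul ⁅e, 𝒢⁆ (mul X Y)) :
    ∀ X Y, LD (mul ℰ 𝒢) X Y = mul ⁅e, mul ℰ 𝒢⁆ (mul X Y) := by
  -- LD e Z W = 0
  have hLDe : ∀ Z W, LD e Z W = 0 := by
    intro Z W
    have h := hHM e e Z W
    rw [hunit e, hunit] at h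
    have h2 : LD e Z W + 0 = LD e Z W + LD e Z W := by rw [add_zero]; exact h
    exact (add_left_cancel h2).symm
  -- Leibniz rule for [e, ·] w.r.t. mul
  have hbr : ⁅e, mul ℰ 𝒢⁆ = mul ⁅e, ℰ⁆ 𝒢 + mul ℰ ⁅e, 𝒢⁆ := by
    have h : (0:V) = ⁅e, mul ℰ 𝒢⁆ - mul ⁅e, ℰ⁆ 𝒢 - mul ℰ ⁅e, 𝒢⁆ := by
      rw [← hLD, hLDe]
    rw [eq_comm, sub_sub, sub_eq_zero] at h
    exact h
  intro X Y
  rw [hHM, hℰ, h𝒢, hbr, haddl]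
  rw [hcomm ℰ (mul ⁅e, 𝒢⁆ (mul X Y)), hassoc, hcomm (mul X Y) ℰ]
  rw [hcomm 𝒢 (mul ⁅e, ℰ⁆ (mul X Y)), hassoc, hcomm (mul X Y) 𝒢]
  rw [hassoc ⁅e, ℰ⁆ 𝒢, hassoc ℰ ⁅e, 𝒢⁆]
  rw [hcomm 𝒢 (mul X Y), hcomm ℰ (mul ⁅e, 𝒢⁆ (mul X Y))]
  rw [hassoc ⁅e, 𝒢⁆ (mul X Y) ℰ, hcomm (mul X Y) ℰ]
  abel
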